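/- Let p, q be distributions on [k] with p_i + q_i > 0 for all i, and let ℓ ≥ 1. Let A := {(Tp, Tq) : T ∈ T_{ℓ,k}}, a subset of ℝ^ℓ × ℝ^ℓ. For any T ∈ T_{ℓ,k}: if (Tp, Tq) is an extreme point of A, then T is a threshold channel for (p,q); in particular, T is deterministic. -/

import Mathlib

open scoped Classical ENNReal
open Finset

noncomputable section

/-- `p` is a probability distribution on `Fin k`. -/
def IsDist {k : ℕ} (p : Fin k → ℝ) : Prop :=
  (∀ i, 0 ≤ p i) ∧ ∑ i, p i = 1

/-- `T` is a channel from `[k]` to `[ℓ]`: nonnegative entries, columns sum to 1. -/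
def IsChannel {ℓ k : ℕ} (T : Matrix (Fin ℓ) (Fin k) ℝ) : Prop :=
  (∀ r c, 0 ≤ T r c) ∧ ∀ c, ∑ r, T r c = 1

/-- Squared Hellinger divergence `d_h²(p,q) = Σ_i (√p_i − √q_i)²`. -/
def hellingerSq {k : ℕ} (p q : Fin k → ℝ) : ℝ :=
  ∑ i, (Real.sqrt (p i) - Real.sqrt (q i)) ^ 2

/-- Total variation distance `d_TV(p,q) = (1/2) Σ_i |p_i − q_i|`. -/
def tvDist {k : ℕ} (p q : Fin k → ℝ) : ℝ :=
  (1 / 2) * ∑ i, |p i - q i|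

/-- `T` is an `ε`-LDP channel: `T(r,c) ≤ e^ε T(r,c')` for all rows `r`, columns `c, c'`. -/
def IsLDP {ℓ k : ℕ} (ε : ℝ) (T : Matrix (Fin ℓ) (Fin k) ℝ) : Prop :=
  IsChannel T ∧ ∀ r c c', T r c ≤ Real.exp ε * T r c'

/-- The deterministic channel induced by a map `f : [k] → [ℓ]`. -/
def detChannel {k ℓ : ℕ} (f : Fin k → Fin ℓ) : Matrix (Fin ℓ) (Fin k) ℝ :=
  fun r c => if r = f c then 1 else 0

/-- Likelihood ratio `p_i / q_i`, taken to be `+∞` when `q_i = 0`. -/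
def lr {k : ℕ} (p q : Fin k → ℝ) (i : Fin k) : EReal :=
  if q i = 0 then ⊤ else ((p i / q i : ℝ) : EReal)

/-- `T` is a threshold channel for `(p, q)`: it is deterministic, induced by a map `f`,
and whenever `p_u/q_u < p_v/q_v` and `f u = f v`, every `w` whose likelihood ratio lies
strictly between those of `u` and `v` satisfies `f w = f u`. -/
def IsThresholdChannel {k ℓ : ℕ} (p q : Fin k → ℝ) (T : Matrix (Fin ℓ) (Fin k) ℝ) : Prop :=
  ∃ f : Fin k → Fin ℓ, T = detChannel f ∧
    ∀ u v w : Fin k, lr p q u < lr p q v → f u = f v →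
      lr p q u < lr p q w → lr p q w < lr p q v → f w = f u

namespace Stmt8Aux

variable {ℓ k : ℕ}

def pert (c : Fin k → ℝ) (r s : Fin ℓ) : Matrix (Fin ℓ) (Fin k) ℝ :=
  fun x y => c y * ((if x = s then (1:ℝ) else 0) - (if x = r then 1 else 0))

lemma pert_mulVec (c : Fin k → ℝ) (r s : Fin ℓ) (v : Fin k → ℝ) (x : Fin ℓ) :
    (pert c r s).mulVec v x
      = (∑ y, c y * v y) * ((if x = s then (1:ℝ) else 0) - (if x = r then 1 else 0)) := by
  unfold pert Matrix.mulVec dotProduct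
  rw [Finset.sum_mul]
  exact Finset.sum_congr rfl fun y _ => by ring

lemma pert_colsum (c : Fin k → ℝ) (r s : Fin ℓ) (y : Fin k) :
    ∑ x, pert c r s x y = 0 := by
  unfold pert
  rw [← Finset.mul_sum, Finset.sum_sub_distrib]
  simp [Finset.sum_ite_eq']

lemma isChannel_add_pert (T : Matrix (Fin ℓ) (Fin k) ℝ) (hT : IsChannel T)
    (c : Fin k → ℝ) (r s : Fin ℓ)
    (hnn : ∀ x y, 0 ≤ T x y + pert c r s x y) : IsChannel (T + pert c r s) := by
  constructor
  · intro x y; simpa [Matrix.add_apply] using hnn x y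
  · intro y
    simp only [Matrix.add_apply, Finset.sum_add_distrib, hT.2 y, pert_colsum, add_zero]

lemma extreme_mid {p q : Fin k → ℝ}
    {A : Set ((Fin ℓ → ℝ) × (Fin ℓ → ℝ))}
    (hA : A = {z | ∃ T : Matrix (Fin ℓ) (Fin k) ℝ, IsChannel T ∧ z = (T.mulVec p, T.mulVec q)})
    {T T1 T2 : Matrix (Fin ℓ) (Fin k) ℝ}
    (hT1 : IsChannel T1) (hT2 : IsChannel T2)
    (hext : (T.mulVec p, T.mulVec q) ∈ A.extremePoints ℝ)
    (hmp : ∀ x, T1.mulVec p x + T2.mulVec p x = 2 * T.mulVec p x)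
    (hmq : ∀ x, T1.mulVec q x + T2.mulVec q x = 2 * T.mulVec q x) :
    T1.mulVec p = T.mulVec p ∧ T1.mulVec q = T.mulVec q := by
  obtain ⟨hx, hmin⟩ := hext
  have h1 : ((T1.mulVec p, T1.mulVec q) : (Fin ℓ → ℝ) × (Fin ℓ → ℝ)) ∈ A := by
    rw [hA]; exact ⟨T1, hT1, rfl⟩
  have h2 : ((T2.mulVec p, T2.mulVec q) : (Fin ℓ → ℝ) × (Fin ℓ → ℝ)) ∈ A := by
    rw [hA]; exact ⟨T2, hT2, rfl⟩
  have hseg : (T.mulVec p, T.mulVec q) ∈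
      openSegment ℝ (T1.mulVec p, T1.mulVec q) (T2.mulVec p, T2.mulVec q) := by
    refine ⟨1/2, 1/2, by norm_num, by norm_num, by norm_num, ?_⟩
    apply Prod.ext
    · funext x
      simp only [Prod.fst_add, Prod.smul_fst, Pi.add_apply, Pi.smul_apply, smul_eq_mul]
      have := hmp x; linarith
    · funext x
      simp only [Prod.snd_add, Prod.smul_snd, Pi.add_apply, Pi.smul_apply, smul_eq_mul]
      have := hmq x; linarith
  have h := hmin h1 h2 hseg
  exact ⟨congrArg Prod.fst h, congrArg Prod.snd h⟩

lemma cross_of_lr_lt {p q : Fin k → ℝ} (hq : ∀ i, 0 ≤ q i)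
    (hpq : ∀ i, 0 < p i + q i) {i j : Fin k} (h : lr p q i < lr p q j) :
    0 < q i ∧ p i * q j < p j * q i := by
  unfold lr at h
  by_cases hqi : q i = 0
  · simp [hqi] at h
  · have hqi' : 0 < q i := lt_of_le_of_ne (hq i) (Ne.symm hqi)
    refine ⟨hqi', ?_⟩
    by_cases hqj : q j = 0
    · have hpj : 0 < p j := by have h1 := hpq j; rw [hqj, add_zero] at h1; exact h1
      have hz : p i * q j = 0 := by rw [hqj, mul_zero]
      rw [hz]
      exact mul_pos hpj hqi'
    · have hqj' : 0 < q j := lt_of_le_of_ne (hq j) (Ne.symm hqj)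
      rw [if_neg hqi, if_neg hqj] at h
      have h' : p i / q i < p j / q j := by exact_mod_cast h
      rw [div_lt_div_iff₀ hqi' hqj'] at h'
      exact h'

end Stmt8Aux

open Stmt8Aux

/-- Extreme points of the joint range under communication constraints are obtained by
threshold channels (in particular, by deterministic channels). -/
theorem stmt8 (k ℓ : ℕ) (hℓ : 1 ≤ ℓ) (p q : Fin k → ℝ)
    (hp : IsDist p) (hq : IsDist q) (hpq : ∀ i, 0 < p i + q i)
    (A : Set ((Fin ℓ → ℝ) × (Fin ℓ → ℝ)))
    (hA : A = {z | ∃ T : Matrix (Fin ℓ) (Fin k) ℝ,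
        IsChannel T ∧ z = (T.mulVec p, T.mulVec q)})
    (T : Matrix (Fin ℓ) (Fin k) ℝ) (hT : IsChannel T)
    (hext : (T.mulVec p, T.mulVec q) ∈ A.extremePoints ℝ) :
    IsThresholdChannel p q T := by
  subst hA
  -- Step 1: each column of T has at most one nonzero entry.
  have hdet : ∀ c : Fin k, ∀ r1 r2 : Fin ℓ, T r1 c ≠ 0 → T r2 c ≠ 0 → r1 = r2 := by
    intro c r1 r2 hne1 hne2
    by_contra hne
    have hpos1 : 0 < T r1 c := lt_of_le_of_ne (hT.1 r1 c) (Ne.symm hne1)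
    have hpos2 : 0 < T r2 c := lt_of_le_of_ne (hT.1 r2 c) (Ne.symm hne2)
    set m := min (T r1 c) (T r2 c) with hm
    have hmpos : 0 < m := lt_min hpos1 hpos2
    have hm1 : m ≤ T r1 c := min_le_left _ _
    have hm2 : m ≤ T r2 c := min_le_right _ _
    set e : Fin k → ℝ := fun y => if y = c then m else 0 with he
    have hsum : ∀ g : Fin k → ℝ, ∑ y, e y * g y = m * g c := by
      intro g
      simp [he, ite_mul, Finset.sum_ite_eq']
    have hnn : ∀ (s r : Fin ℓ), m ≤ T r c → ∀ x y, 0 ≤ T x y + pert e r s x y := by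
      intro s r hmr x y
      have hpe : pert e r s x y
          = (if y = c then m else 0) * ((if x = s then (1:ℝ) else 0) - (if x = r then 1 else 0)) := by
        simp [pert, he]
      rw [hpe]
      have h0 := hT.1 x y
      rcases eq_or_ne y c with hy | hy
      · rw [if_pos hy]
        rcases eq_or_ne x r with hx | hx
        · have hmx : m ≤ T x y := by rw [hx, hy]; exact hmr
          rw [if_pos hx]
          rcases eq_or_ne x s with hx2 | hx2
          · rw [if_pos hx2]; nlinarith
          · rw [if_neg hx2]; nlinarith
        · rw [if_neg hx]
          rcases eq_or_ne x s with hx2 | hx2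
          · rw [if_pos hx2]; nlinarith
          · rw [if_neg hx2]; nlinarith
      · rw [if_neg hy, zero_mul, add_zero]; exact h0
    have hch1 := isChannel_add_pert T hT e r1 r2 (hnn r2 r1 hm1)
    have hch2 := isChannel_add_pert T hT e r2 r1 (hnn r1 r2 hm2)
    have hmp : ∀ x, (T + pert e r1 r2).mulVec p x + (T + pert e r2 r1).mulVec p x
        = 2 * T.mulVec p x := by
      intro x
      rw [Matrix.add_mulVec, Matrix.add_mulVec]
      simp only [Pi.add_apply, pert_mulVec]
      ring
    have hmq : ∀ x, (T + pert e r1 r2).mulVec q x + (T + pert e r2 r1).mulVec q x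
        = 2 * T.mulVec q x := by
      intro x
      rw [Matrix.add_mulVec, Matrix.add_mulVec]
      simp only [Pi.add_apply, pert_mulVec]
      ring
    have hmid := extreme_mid rfl hch1 hch2 hext hmp hmq
    have hp2 := congrFun hmid.1 r2
    have hq2 := congrFun hmid.2 r2
    rw [Matrix.add_mulVec] at hp2 hq2
    have hne' : ¬ (r2 = r1) := fun h => hne h.symm
    simp [Pi.add_apply, pert_mulVec, hsum, hne'] at hp2 hq2
    have hpc' : p c = 0 := hp2.resolve_left hmpos.ne'
    have hqc' : q c = 0 := hq2.resolve_left hmpos.ne'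
    have hcc := hpq c
    rw [hpc', hqc'] at hcc
    linarith
  -- Step 2: T is deterministic.
  have hex : ∀ c : Fin k, ∃ r, T r c ≠ 0 := by
    intro c
    by_contra h
    push_neg at h
    have h2 := hT.2 c
    simp [h] at h2
  choose f hfc using hex
  have hone : ∀ c, T (f c) c = 1 := by
    intro c
    have h2 := hT.2 c
    rw [Finset.sum_eq_single (f c)] at h2
    · exact h2
    · intro r _ hr
      by_contra h
      exact hr (hdet c r (f c) h (hfc c))
    · intro h; exact absurd (Finset.mem_univ _) h
  have hTdet : T = detChannel f := by
    funext x y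
    unfold detChannel
    rcases eq_or_ne x (f y) with h | h
    · rw [if_pos h, h, hone y]
    · rw [if_neg h]
      by_contra hz
      exact h (hdet y x (f y) hz (hfc y))
  refine ⟨f, hTdet, ?_⟩
  -- Step 3: threshold property.
  intro u v w huv hfuv h1 h2
  by_contra hfw
  obtain ⟨hqu, cross_uw⟩ := cross_of_lr_lt hq.1 hpq h1
  obtain ⟨hqw, cross_wv⟩ := cross_of_lr_lt hq.1 hpq h2
  obtain ⟨-, cross_uv⟩ := cross_of_lr_lt hq.1 hpq (h1.trans h2)
  have huw : u ≠ w := fun h => by rw [h] at h1; exact lt_irrefl _ h1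
  have hrs : f u ≠ f w := fun h => hfw h.symm
  have hDneg : p u * q v - p v * q u < 0 := by nlinarith
  have hD0 : p u * q v - p v * q u ≠ 0 := hDneg.ne
  set a : ℝ := (p w * q v - p v * q w) / (p u * q v - p v * q u) with ha
  set b : ℝ := (p u * q w - p w * q u) / (p u * q v - p v * q u) with hb
  have hapos : 0 < a := div_pos_of_neg_of_neg (by nlinarith) hDneg
  have hbpos : 0 < b := div_pos_of_neg_of_neg (by nlinarith) hDneg
  have hpw : p w = a * p u + b * p v := by
    rw [ha, hb, div_mul_eq_mul_div, div_mul_eq_mul_div, ← add_div, eq_div_iff hD0]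
    ring
  have hqw2 : q w = a * q u + b * q v := by
    rw [ha, hb, div_mul_eq_mul_div, div_mul_eq_mul_div, ← add_div, eq_div_iff hD0]
    ring
  have hab : (0:ℝ) < 1 + a + b := by linarith
  set t : ℝ := (1 + a + b)⁻¹ with ht
  have htpos : 0 < t := inv_pos.mpr hab
  have htsum : t + t * a + t * b = 1 := by
    have h := inv_mul_cancel₀ hab.ne'
    rw [← ht] at h
    linear_combination h
  have hta : t * a ≤ 1 := by nlinarith
  have ht1 : t ≤ 1 := by nlinarith
  have htb : t * b ≤ 1 := by nlinarith
  have hta0 : 0 < t * a := mul_pos htpos hapos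
  have htb0' : 0 < t * b := mul_pos htpos hbpos
  clear_value t a b
  set c1 : Fin k → ℝ := fun y => if y = u then t * a else if y = w then -t else 0 with hc1
  set c2 : Fin k → ℝ := fun y => if y = v then t * b else 0 with hc2
  have hsum1 : ∀ g : Fin k → ℝ, ∑ y, c1 y * g y = t * a * g u - t * g w := by
    intro g
    have step : ∀ y, c1 y * g y
        = (if y = u then t * a * g u else 0) + (if y = w then -(t * g w) else 0) := by
      intro y
      simp only [hc1]
      rcases eq_or_ne y u with h | h
      · rw [if_pos h, if_pos h, if_neg (h ▸ huw), h]; ring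
      · rw [if_neg h, if_neg h]
        rcases eq_or_ne y w with h2 | h2
        · rw [if_pos h2, if_pos h2, h2]; ring
        · rw [if_neg h2, if_neg h2]; ring
    rw [Finset.sum_congr rfl fun y _ => step y, Finset.sum_add_distrib]
    simp [Finset.sum_ite_eq']
    ring
  have hsum2 : ∀ g : Fin k → ℝ, ∑ y, c2 y * g y = t * b * g v := by
    intro g
    simp [hc2, ite_mul, Finset.sum_ite_eq']
  have hfvr : f v = f u := hfuv.symm
  have hnn1 : ∀ x y, 0 ≤ T x y + pert c1 (f u) (f w) x y := by
    intro x y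
    have hpe : pert c1 (f u) (f w) x y
        = c1 y * ((if x = f w then (1:ℝ) else 0) - (if x = f u then 1 else 0)) := rfl
    rw [hpe, hTdet]
    unfold detChannel
    rcases eq_or_ne y u with hy | hy
    · have hcy : c1 y = t * a := by simp only [hc1]; rw [if_pos hy]
      rw [hcy, hy]
      rcases eq_or_ne x (f u) with hx | hx
      · rw [if_pos hx, if_neg (fun h => hrs (hx.symm.trans h))]
        linarith
      · rw [if_neg hx]
        rcases eq_or_ne x (f w) with hx2 | hx2
        · rw [if_pos hx2]; linarith
        · rw [if_neg hx2]; linarith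
    · rcases eq_or_ne y w with hy2 | hy2
      · have hcy : c1 y = -t := by simp only [hc1]; rw [if_neg hy, if_pos hy2]
        rw [hcy, hy2]
        rcases eq_or_ne x (f w) with hx | hx
        · rw [if_pos hx, if_neg (fun h => hrs (h.symm.trans hx))]
          linarith
        · rw [if_neg hx]
          rcases eq_or_ne x (f u) with hx2 | hx2
          · rw [if_pos hx2]; linarith
          · rw [if_neg hx2]; linarith
      · have hcy : c1 y = 0 := by simp only [hc1]; rw [if_neg hy, if_neg hy2]
        rw [hcy, zero_mul, add_zero]
        split_ifs <;> norm_num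
  have hnn2 : ∀ x y, 0 ≤ T x y + pert c2 (f u) (f w) x y := by
    intro x y
    have hpe : pert c2 (f u) (f w) x y
        = c2 y * ((if x = f w then (1:ℝ) else 0) - (if x = f u then 1 else 0)) := rfl
    rw [hpe, hTdet]
    unfold detChannel
    rcases eq_or_ne y v with hy | hy
    · have hcy : c2 y = t * b := by simp only [hc2]; rw [if_pos hy]
      rw [hcy, hy]
      rcases eq_or_ne x (f u) with hx | hx
      · rw [if_pos (hx.trans hfvr.symm), if_pos hx, if_neg (fun h => hrs (hx.symm.trans h))]
        linarith
      · rw [if_neg (fun h => hx (h.trans hfvr)), if_neg hx]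
        rcases eq_or_ne x (f w) with hx2 | hx2
        · rw [if_pos hx2]; linarith
        · rw [if_neg hx2]; linarith
    · have hcy : c2 y = 0 := by simp only [hc2]; rw [if_neg hy]
      rw [hcy, zero_mul, add_zero]
      split_ifs <;> norm_num
  have hch1 := isChannel_add_pert T hT c1 (f u) (f w) hnn1
  have hch2 := isChannel_add_pert T hT c2 (f u) (f w) hnn2
  have hmp : ∀ x, (T + pert c1 (f u) (f w)).mulVec p x
      + (T + pert c2 (f u) (f w)).mulVec p x = 2 * T.mulVec p x := by
    intro x
    rw [Matrix.add_mulVec, Matrix.add_mulVec]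
    simp only [Pi.add_apply, pert_mulVec, hsum1, hsum2]
    have hcoef : t * a * p u - t * p w = -(t * b * p v) := by rw [hpw]; ring
    rw [hcoef]; ring
  have hmq : ∀ x, (T + pert c1 (f u) (f w)).mulVec q x
      + (T + pert c2 (f u) (f w)).mulVec q x = 2 * T.mulVec q x := by
    intro x
    rw [Matrix.add_mulVec, Matrix.add_mulVec]
    simp only [Pi.add_apply, pert_mulVec, hsum1, hsum2]
    have hcoef : t * a * q u - t * q w = -(t * b * q v) := by rw [hqw2]; ring
    rw [hcoef]; ring
  have hmid := extreme_mid rfl hch1 hch2 hext hmp hmq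
  have hp2 := congrFun hmid.1 (f w)
  have hq2 := congrFun hmid.2 (f w)
  rw [Matrix.add_mulVec] at hp2 hq2
  have hrs' : ¬ (f w = f u) := hfw
  simp [Pi.add_apply, pert_mulVec, hsum1, hrs'] at hp2 hq2
  have hcp : t * a * p u - t * p w = 0 := by linarith
  have hcq : t * a * q u - t * q w = 0 := by linarith
  have hpv : t * b * p v = 0 := by
    have hh : t * b * p v = -(t * a * p u - t * p w) := by rw [hpw]; ring
    rw [hh, hcp, neg_zero]
  have hqv : t * b * q v = 0 := by
    have hh : t * b * q v = -(t * a * q u - t * q w) := by rw [hqw2]; ring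
    rw [hh, hcq, neg_zero]
  have htb0 : t * b ≠ 0 := (mul_pos htpos hbpos).ne'
  have hpv' : p v = 0 := (mul_eq_zero.mp hpv).resolve_left htb0
  have hqv' : q v = 0 := (mul_eq_zero.mp hqv).resolve_left htb0
  have hvv := hpq v
  rw [hpv', hqv'] at hvv
  linarith
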